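/- Let S ⊂ {1,...,n} with |S| = d, let γ > 0, and define g_S(x) = 2^{-d} Σ_{θ ∈ {±1}^d} Π_{i ∉ S} φ₀(x_i) Π_{i ∈ S} φ_{θ_i γ}(x_i), where φ_μ is the univariate N(μ,1) density. Then for two such sets S₁, S₂, ∫ g_{S₁} g_{S₂} / f = (cosh γ²)^{|S₁ ∩ S₂|}, where f(x) = Π_{i=1}^n φ₀(x_i). -/

import Mathlib

open MeasureTheory

/-- The univariate `N(a, 1)` density. -/
noncomputable def normalDensity (a t : ℝ) : ℝ :=
  (2 * Real.pi) ^ (-(1 : ℝ) / 2) * Real.exp (-(t - a) ^ 2 / 2)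

/-- Uniform mixture over Rademacher sign patterns of a signal of amplitude `γ`
supported on the coordinates in `S`. -/
noncomputable def rademacherMix (n : ℕ) (γ : ℝ) (S : Finset (Fin n)) (x : Fin n → ℝ) : ℝ :=
  (∑ θ : {i // i ∈ S} → Bool,
      (∏ i ∈ Sᶜ, normalDensity 0 (x i)) *
        ∏ i ∈ S.attach, normalDensity (if θ i then γ else -γ) (x i)) / 2 ^ S.card

lemma normalDensity_eq_gaussian (a : ℝ) :
    normalDensity a = ProbabilityTheory.gaussianPDFReal a 1 := by
  funext t
  rw [normalDensity, ProbabilityTheory.gaussianPDFReal]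
  have h2 : (0:ℝ) ≤ 2 * Real.pi := by positivity
  push_cast
  rw [mul_one, mul_one, Real.sqrt_eq_rpow, ← Real.rpow_neg h2]
  norm_num

lemma normalDensity_integrable (a : ℝ) : Integrable (normalDensity a) := by
  rw [normalDensity_eq_gaussian]; exact ProbabilityTheory.integrable_gaussianPDFReal a 1

lemma normalDensity_integral (a : ℝ) : ∫ t, normalDensity a t = 1 := by
  rw [normalDensity_eq_gaussian]
  exact ProbabilityTheory.integral_gaussianPDFReal_eq_one a one_ne_zero

lemma normalDensity_pos (a t : ℝ) : 0 < normalDensity a t := by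
  rw [normalDensity]; positivity

lemma normalDensity_ratio (a b t : ℝ) :
    normalDensity a t * normalDensity b t / normalDensity 0 t
      = Real.exp (a * b) * normalDensity (a + b) t := by
  rw [div_eq_iff (normalDensity_pos 0 t).ne']
  simp only [normalDensity]
  rw [mul_mul_mul_comm, ← Real.exp_add, mul_assoc (Real.exp (a*b)), mul_mul_mul_comm,
    ← Real.exp_add, mul_left_comm, ← Real.exp_add]
  congr 1
  ring_nf

/-- The per-coordinate mean of the signed mixture component. -/
noncomputable def meanOf {n : ℕ} (γ : ℝ) (S : Finset (Fin n)) (θ : {i // i ∈ S} → Bool)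
    (i : Fin n) : ℝ :=
  if h : i ∈ S then (if θ ⟨i, h⟩ then γ else -γ) else 0

lemma mix_eq {n : ℕ} (γ : ℝ) (S : Finset (Fin n)) (x : Fin n → ℝ) :
    rademacherMix n γ S x
      = (∑ θ : {i // i ∈ S} → Bool, ∏ i, normalDensity (meanOf γ S θ i) (x i)) / 2 ^ S.card := by
  rw [rademacherMix]
  congr 1
  refine Finset.sum_congr rfl fun θ _ => ?_
  rw [← Finset.prod_mul_prod_compl S (fun i => normalDensity (meanOf γ S θ i) (x i)), mul_comm]
  congr 1
  · rw [← Finset.prod_attach S (fun i => normalDensity (meanOf γ S θ i) (x i))]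
    exact Finset.prod_congr rfl fun j _ => by simp only [meanOf, dif_pos j.2]
  · exact Finset.prod_congr rfl fun i hi => by
      simp only [meanOf, dif_neg (Finset.mem_compl.mp hi)]

lemma radInnerSum {n : ℕ} (γ : ℝ) (S₁ S₂ : Finset (Fin n)) (θ₁ : {i // i ∈ S₁} → Bool) :
    ∑ θ₂ : {i // i ∈ S₂} → Bool,
        ∏ i, Real.exp (meanOf γ S₁ θ₁ i * meanOf γ S₂ θ₂ i)
      = (2 * Real.cosh (γ ^ 2)) ^ (S₁ ∩ S₂).card
          * 2 ^ (S₂.card - (S₁ ∩ S₂).card) := by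
  have h1 : ∀ θ₂ : {i // i ∈ S₂} → Bool,
      (∏ i : Fin n, Real.exp (meanOf γ S₁ θ₁ i * meanOf γ S₂ θ₂ i))
        = ∏ j : {i // i ∈ S₂},
            Real.exp (meanOf γ S₁ θ₁ j.1 * (if θ₂ j then γ else -γ)) := by
    intro θ₂
    rw [← Finset.prod_subset (Finset.subset_univ S₂)
      (fun i _ hi => by simp only [meanOf, dif_neg hi, mul_zero, Real.exp_zero]),
      ← Finset.prod_attach S₂
        (fun i => Real.exp (meanOf γ S₁ θ₁ i * meanOf γ S₂ θ₂ i)),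
      Finset.univ_eq_attach]
    exact Finset.prod_congr rfl fun j _ => by simp only [meanOf, dif_pos j.2]
  simp_rw [h1]
  rw [← Fintype.piFinset_univ, ← Finset.prod_univ_sum
    (fun _ : {i // i ∈ S₂} => (Finset.univ : Finset Bool))
    (fun j b => Real.exp (meanOf γ S₁ θ₁ j.1 * (if b then γ else -γ)))]
  have h2 : ∀ j : {i // i ∈ S₂},
      (∑ b : Bool, Real.exp (meanOf γ S₁ θ₁ j.1 * (if b then γ else -γ)))
        = if (j : Fin n) ∈ S₁ then 2 * Real.cosh (γ ^ 2) else 2 := by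
    intro j
    rw [Fintype.sum_bool]
    by_cases h : (j : Fin n) ∈ S₁
    · rw [if_pos h]; simp only [meanOf, dif_pos h]; rw [Real.cosh_eq]
      rcases θ₁ ⟨j, h⟩ <;>
        simp only [Bool.false_eq_true, if_false, if_true, ite_true, ite_false]
      · rw [show -γ * γ = -(γ^2) by ring, show -γ * -γ = γ^2 by ring]; ring
      · rw [show γ * γ = γ^2 by ring, show γ * -γ = -(γ^2) by ring]; ring
    · rw [if_neg h]; simp only [meanOf, dif_neg h, zero_mul, Real.exp_zero]; norm_num
  rw [Finset.prod_congr rfl fun j _ => h2 j, Finset.prod_ite, Finset.prod_const,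
    Finset.prod_const]
  have hk : (Finset.univ.filter fun j : {i // i ∈ S₂} => (j : Fin n) ∈ S₁).card
      = (S₁ ∩ S₂).card := by
    refine Finset.card_bij (fun j _ => (j : Fin n)) ?_ ?_ ?_
    · intro j hj
      simp only [Finset.mem_filter, Finset.mem_univ, true_and] at hj
      exact Finset.mem_inter.mpr ⟨hj, j.2⟩
    · intro a _ b _ hab; exact Subtype.ext hab
    · intro i hi
      rcases Finset.mem_inter.mp hi with ⟨h1', h2'⟩
      exact ⟨⟨i, h2'⟩, by simp [h1'], rfl⟩
  have hk2 : (Finset.univ.filter fun j : {i // i ∈ S₂} => ¬ (j : Fin n) ∈ S₁).card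
      = S₂.card - (S₁ ∩ S₂).card := by
    have h3 := Finset.card_filter_add_card_filter_not
      (s := (Finset.univ : Finset {i // i ∈ S₂})) (p := fun j => (j : Fin n) ∈ S₁)
    rw [Finset.card_univ, Fintype.card_coe, hk] at h3
    omega
  rw [hk, hk2]

theorem rademacher_mix_affinity (n d : ℕ) (γ : ℝ) (hγ : 0 < γ)
    (S₁ S₂ : Finset (Fin n)) (hS₁ : S₁.card = d) (hS₂ : S₂.card = d) :
    ∫ x : Fin n → ℝ,
        rademacherMix n γ S₁ x * rademacherMix n γ S₂ x / ∏ i, normalDensity 0 (x i)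
      = Real.cosh (γ ^ 2) ^ (S₁ ∩ S₂).card := by
  have hx : ∀ x : Fin n → ℝ,
      rademacherMix n γ S₁ x * rademacherMix n γ S₂ x / ∏ i, normalDensity 0 (x i)
        = (∑ θ₁ : {i // i ∈ S₁} → Bool, ∑ θ₂ : {i // i ∈ S₂} → Bool,
            ∏ i, (Real.exp (meanOf γ S₁ θ₁ i * meanOf γ S₂ θ₂ i)
              * normalDensity (meanOf γ S₁ θ₁ i + meanOf γ S₂ θ₂ i) (x i)))
          / (2 ^ S₁.card * 2 ^ S₂.card) := by
    intro x
    rw [mix_eq, mix_eq, div_mul_div_comm, div_div,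
      mul_comm ((2:ℝ) ^ S₁.card * 2 ^ S₂.card), ← div_div, Finset.sum_mul_sum]
    congr 1
    rw [Finset.sum_div]
    refine Finset.sum_congr rfl fun θ₁ _ => ?_
    rw [Finset.sum_div]
    refine Finset.sum_congr rfl fun θ₂ _ => ?_
    rw [← Finset.prod_mul_distrib, ← Finset.prod_div_distrib]
    exact Finset.prod_congr rfl fun i _ => normalDensity_ratio _ _ _
  simp only [hx]
  have hint : ∀ (θ₁ : {i // i ∈ S₁} → Bool) (θ₂ : {i // i ∈ S₂} → Bool),
      Integrable (fun x : Fin n → ℝ =>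
        ∏ i, (Real.exp (meanOf γ S₁ θ₁ i * meanOf γ S₂ θ₂ i)
          * normalDensity (meanOf γ S₁ θ₁ i + meanOf γ S₂ θ₂ i) (x i))) :=
    fun θ₁ θ₂ => Integrable.fintype_prod
      (fun i => (normalDensity_integrable _).const_mul _)
  rw [integral_div, integral_finset_sum _
    (fun θ₁ _ => integrable_finset_sum _ fun θ₂ _ => hint θ₁ θ₂)]
  rw [Finset.sum_congr rfl fun θ₁ _ =>
    integral_finset_sum _ fun θ₂ _ => hint θ₁ θ₂]
  have hI : ∀ (θ₁ : {i // i ∈ S₁} → Bool) (θ₂ : {i // i ∈ S₂} → Bool),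
      (∫ x : Fin n → ℝ, ∏ i, (Real.exp (meanOf γ S₁ θ₁ i * meanOf γ S₂ θ₂ i)
          * normalDensity (meanOf γ S₁ θ₁ i + meanOf γ S₂ θ₂ i) (x i)))
        = ∏ i, Real.exp (meanOf γ S₁ θ₁ i * meanOf γ S₂ θ₂ i) := by
    intro θ₁ θ₂
    rw [integral_fintype_prod_volume_eq_prod
      (fun i t => Real.exp (meanOf γ S₁ θ₁ i * meanOf γ S₂ θ₂ i)
        * normalDensity (meanOf γ S₁ θ₁ i + meanOf γ S₂ θ₂ i) t)]
    exact Finset.prod_congr rfl fun i _ => by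
      rw [integral_const_mul, normalDensity_integral, mul_one]
  rw [Finset.sum_congr rfl fun θ₁ _ => Finset.sum_congr rfl fun θ₂ _ => hI θ₁ θ₂]
  simp_rw [radInnerSum]
  rw [Finset.sum_const, Finset.card_univ, nsmul_eq_mul]
  have hcard : Fintype.card ({i // i ∈ S₁} → Bool) = 2 ^ S₁.card := by
    rw [Fintype.card_fun, Fintype.card_bool, Fintype.card_coe]
  rw [hcard]
  set k := (S₁ ∩ S₂).card
  have hkle : k ≤ S₂.card := Finset.card_le_card Finset.inter_subset_right
  have h2 : (2:ℝ) ^ k * 2 ^ (S₂.card - k) = 2 ^ S₂.card := by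
    rw [← pow_add]; congr 1; omega
  push_cast
  rw [mul_pow, show ((2:ℝ) ^ S₁.card) * ((2 ^ k * Real.cosh (γ^2) ^ k) * 2 ^ (S₂.card - k))
      = ((2:ℝ) ^ S₁.card * 2 ^ S₂.card) * Real.cosh (γ^2) ^ k from by rw [← h2]; ring,
    mul_div_cancel_left₀ _ (by positivity)]
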